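/- For any finite set V of points in the plane with pairwise distinct distances, the Euclidean minimum spanning tree of V is a subgraph of the relative neighborhood graph of V; that is, every edge uv of the EMST satisfies the empty-lens property: there is no point w in V \ {u,v} with |uw| < |uv| and |vw| < |uv|. -/

import Mathlib

noncomputable section

/-- Points of the plane. -/
abbrev Pt := EuclideanSpace ℝ (Fin 2)

/-- The relative neighborhood graph of a finite point set `V`:
`u` and `v` are adjacent iff they are distinct points of `V` and no `w ∈ V \ {u,v}`
lies in the lens of `u` and `v`. -/
def rng (V : Finset Pt) : SimpleGraph Pt where
  Adj u v := u ≠ v ∧ u ∈ V ∧ v ∈ V ∧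
    ∀ w ∈ V, w ≠ u → w ≠ v → ¬ (dist u w < dist u v ∧ dist v w < dist u v)
  symm := ⟨by
    rintro u v ⟨h1, h2, h3, h4⟩
    refine ⟨h1.symm, h3, h2, fun w hw hwv hwu h => ?_⟩
    rw [dist_comm v u] at h
    exact h4 w hw hwu hwv ⟨h.2, h.1⟩⟩
  loopless := ⟨fun u h => h.1 rfl⟩

/-- The Euclidean length of an edge between two points of `V`. -/
def edgeLen {V : Finset Pt} : Sym2 {x // x ∈ V} → ℝ :=
  Sym2.lift ⟨fun a b => dist (a : Pt) (b : Pt), fun _ _ => dist_comm _ _⟩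

/-- The total Euclidean weight of a graph on the points of `V`. -/
def treeWeight {V : Finset Pt} (T : SimpleGraph {x // x ∈ V}) : ℝ :=
  ∑ e ∈ T.edgeSet.toFinite.toFinset, edgeLen e

/-- General position: all pairwise distances between points of `V` are distinct. -/
def GenPos (V : Finset Pt) : Prop :=
  ∀ u v x y : Pt, u ∈ V → v ∈ V → x ∈ V → y ∈ V → u ≠ v → x ≠ y →
    s(u, v) ≠ s(x, y) → dist u v ≠ dist x y

/-- After deleting the edge `uv`, every vertex that could reach `u` can still reach
`u` or `v`. -/
lemma reach_or {S : Type*} (T : SimpleGraph S) (u v : S) :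
    ∀ {x : S}, T.Walk x u →
      (T.deleteEdges {s(u, v)}).Reachable x u ∨ (T.deleteEdges {s(u, v)}).Reachable x v := by
  intro x p
  induction p with
  | nil => exact Or.inl (SimpleGraph.Reachable.refl _)
  | @cons a b c h q ih =>
    by_cases he : s(a, b) = s(c, v)
    · rw [Sym2.eq_iff] at he
      rcases he with ⟨ha, hb⟩ | ⟨ha, hb⟩
      · subst ha
        exact Or.inl (SimpleGraph.Reachable.refl _)
      · subst ha
        exact Or.inr (SimpleGraph.Reachable.refl _)
    · have hadj : (T.deleteEdges {s(c, v)}).Adj a b := by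
        rw [SimpleGraph.deleteEdges_adj]
        exact ⟨h, by simpa using he⟩
      rcases ih with h1 | h1
      · exact Or.inl (hadj.reachable.trans h1)
      · exact Or.inr (hadj.reachable.trans h1)

lemma exchange (V : Finset Pt) (T : SimpleGraph {x // x ∈ V}) (hT : T.IsTree)
    (hmin : ∀ T' : SimpleGraph {x // x ∈ V}, T'.IsTree → treeWeight T ≤ treeWeight T')
    (u v W : {x // x ∈ V}) (huv : T.Adj u v) (hWu : W ≠ u) (hWv : W ≠ v)
    (hreach : (T.deleteEdges {s(u, v)}).Reachable W u)
    (hd : dist (W : Pt) (v : Pt) < dist (u : Pt) (v : Pt)) : False := by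
  classical
  set G := T.deleteEdges {s(u, v)} with hG
  have hGle : G ≤ T := SimpleGraph.deleteEdges_le _
  -- s(u,v) is a bridge in T
  have hbr : T.IsBridge s(u, v) :=
    (SimpleGraph.isAcyclic_iff_forall_adj_isBridge.mp hT.2) huv
  have hnr : ¬ G.Reachable u v := hbr
  -- s(W,v) is not an edge of T
  have hsne : s((W : {x // x ∈ V}), v) ≠ s(u, v) := by
    intro h
    rw [Sym2.eq_iff] at h
    rcases h with ⟨h1, _⟩ | ⟨h1, _⟩
    · exact hWu h1
    · exact hWv h1
  have hWvT : ¬ T.Adj W v := by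
    intro hadj
    have : G.Adj W v := by
      rw [hG, SimpleGraph.deleteEdges_adj]
      exact ⟨hadj, by simpa using hsne⟩
    exact hnr (hreach.symm.trans this.reachable)
  -- the exchanged graph
  set T' : SimpleGraph {x // x ∈ V} := G ⊔ SimpleGraph.edge W v with hT'
  have hGleT' : G ≤ T' := le_sup_left
  have hT'adj : T'.Adj W v := by
    refine Or.inr ?_
    rw [SimpleGraph.edge_adj]
    exact ⟨Or.inl ⟨rfl, rfl⟩, hWv⟩
  -- connectivity
  have hreachv : ∀ x : {y // y ∈ V}, T'.Reachable x v := by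
    intro x
    rcases reach_or T u v ((hT.1.1 x u).some) with h1 | h1
    · exact ((h1.mono hGleT').trans ((hreach.symm.mono hGleT').trans hT'adj.reachable))
    · exact h1.mono hGleT'
  have hconn : T'.Connected := by
    rw [SimpleGraph.connected_iff]
    exact ⟨fun a b => (hreachv a).trans (hreachv b).symm, ⟨u⟩⟩
  -- acyclicity
  have hGac : G.IsAcyclic := fun x c hc => hT.2 (c.mapLe hGle) (hc.mapLe hGle)
  have hbr' : T'.IsBridge s((W : {x // x ∈ V}), v) := by
    rw [SimpleGraph.isBridge_iff]
    intro hre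
    have hle : (T' \ SimpleGraph.fromEdgeSet {s((W : {x // x ∈ V}), v)}) ≤ G := by
      intro a b hab
      rcases hab.1 with h1 | h1
      · exact h1
      · exfalso
        rw [SimpleGraph.edge_adj] at h1
        apply hab.2
        rw [SimpleGraph.fromEdgeSet_adj]
        refine ⟨?_, h1.2⟩
        rcases h1.1 with ⟨rfl, rfl⟩ | ⟨rfl, rfl⟩
        · rfl
        · simp [Sym2.eq_swap]
    exact hnr (hreach.symm.trans (hre.mono hle))
  have hac : T'.IsAcyclic := by
    intro x c hc
    have hnot : s((W : {x // x ∈ V}), v) ∉ c.edges :=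
      (SimpleGraph.isBridge_iff_forall_cycle_notMem hT'adj).mp hbr' c hc
    have hsub : ∀ e ∈ c.edges, e ∈ G.edgeSet := by
      intro e he
      have h1 : e ∈ T'.edgeSet := c.edges_subset_edgeSet he
      rw [hT', SimpleGraph.edgeSet_sup, SimpleGraph.edge_edgeSet_of_ne hWv] at h1
      rcases h1 with h1 | h1
      · exact h1
      · rw [Set.mem_singleton_iff] at h1
        exact absurd (h1 ▸ he) hnot
    exact hGac (c.transfer G hsub) (hc.transfer hsub)
  have hT'tree : T'.IsTree := ⟨hconn, hac⟩
  -- edge sets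
  have hE : T'.edgeSet = insert s((W : {x // x ∈ V}), v) (T.edgeSet \ {s(u, v)}) := by
    rw [hT', SimpleGraph.edgeSet_sup, hG, SimpleGraph.edgeSet_deleteEdges,
      SimpleGraph.edge_edgeSet_of_ne hWv, Set.union_singleton]
  -- weight comparison
  have hWvnotT : s((W : {x // x ∈ V}), v) ∉ T.edgeSet := by
    rw [SimpleGraph.mem_edgeSet]; exact hWvT
  have hA' : T'.edgeSet.toFinite.toFinset
      = insert s((W : {x // x ∈ V}), v) ((T.edgeSet.toFinite.toFinset).erase s(u, v)) := by
    ext x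
    simp only [Set.Finite.mem_toFinset, hE, Set.mem_insert_iff, Set.mem_diff,
      Set.mem_singleton_iff, Finset.mem_insert, Finset.mem_erase]
    tauto
  have hmemuv : s(u, v) ∈ T.edgeSet.toFinite.toFinset := by
    rw [Set.Finite.mem_toFinset]; exact huv
  have hnotmem : s((W : {x // x ∈ V}), v) ∉ (T.edgeSet.toFinite.toFinset).erase s(u, v) := by
    intro h
    exact hWvnotT (Set.Finite.mem_toFinset _ |>.mp (Finset.mem_of_mem_erase h))
  have hw' : treeWeight T' = edgeLen s((W : {x // x ∈ V}), v)
      + (treeWeight T - edgeLen s(u, v)) := by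
    rw [treeWeight, hA', Finset.sum_insert hnotmem, Finset.sum_erase_eq_sub hmemuv]
    rfl
  have hlt : treeWeight T' < treeWeight T := by
    have h1 : edgeLen s((W : {x // x ∈ V}), v) = dist (W : Pt) (v : Pt) := rfl
    have h2 : edgeLen s(u, v) = dist (u : Pt) (v : Pt) := rfl
    rw [hw', h1, h2]; linarith
  exact absurd (hmin T' hT'tree) (not_le.mpr hlt)

/-- Every edge of the Euclidean minimum spanning tree of `V` is an edge of the
relative neighborhood graph of `V`. -/
theorem stmt_0 (V : Finset Pt) (hgp : GenPos V)
    (T : SimpleGraph {x // x ∈ V}) (hT : T.IsTree)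
    (hmin : ∀ T' : SimpleGraph {x // x ∈ V}, T'.IsTree → treeWeight T ≤ treeWeight T')
    (u v : {x // x ∈ V}) (huv : T.Adj u v) :
    (rng V).Adj (u : Pt) (v : Pt) := by
  refine ⟨fun h => huv.ne (Subtype.ext h), u.2, v.2, ?_⟩
  rintro w hw hwu hwv ⟨h1, h2⟩
  set W : {x // x ∈ V} := ⟨w, hw⟩ with hWdef
  have hWu : W ≠ u := fun h => hwu (congrArg Subtype.val h)
  have hWv : W ≠ v := fun h => hwv (congrArg Subtype.val h)
  rcases reach_or T u v ((hT.1.1 W u).some) with hr | hr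
  · exact exchange V T hT hmin u v W huv hWu hWv hr
      (by simpa [hWdef, dist_comm] using h2)
  · have hr' : (T.deleteEdges {s(v, u)}).Reachable W v := by
      rwa [Sym2.eq_swap (a := v) (b := u)]
    exact exchange V T hT hmin v u W huv.symm hWv hWu hr'
      (by simpa [hWdef, dist_comm] using h1)

end
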